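/- Let p ∈ (0,1) and q ∈ [0,1]. Then for ℙ_μ-almost every x ∈ Σ₂, the frequencies α_n(x) := N_1(x_{n/2+1}^n)/(n/2) (defined for even n, where N_1(x_m^n) = #{k ∈ [m,n] : x_k = 1}) satisfy lim_{n→∞, n even} α_n(x) = 2p/(1+p+q). -/

import Mathlib

open Filter MeasureTheory Real Set

noncomputable section

/-- `Σ₂ = {0,1}^ℕ`: the space of 0-1 sequences `(x_k)_{k ≥ 1}`, where the entry `x_k`
(for `k ≥ 1`) is represented by `x (k-1) : Bool`. -/
abbrev Sigma2 : Type := ℕ → Bool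

/-- The metric `ρ((x_k),(y_k)) = 2^{-min{n : x_n ≠ y_n}}` (up to the indexing convention
`dist x y = (1/2)^{first index where x,y differ}`). -/
noncomputable instance : MetricSpace Sigma2 :=
  PiNat.metricSpaceOfDiscreteUniformity fun _ => rfl

/-- The digit `x_k ∈ {0,1}` (for `k ≥ 1`) of a sequence, as a real number. -/
def xval (x : Sigma2) (k : ℕ) : ℝ := if x (k - 1) then 1 else 0

/-- `A_θ = {(x_k) ∈ Σ₂ : lim_{n→∞} (1/n) ∑_{k=1}^n x_k x_{2k} = θ}`. -/
def Aset (θ : ℝ) : Set Sigma2 :=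
  {x | Tendsto (fun n : ℕ => (∑ k ∈ Finset.Icc 1 n, xval x k * xval x (2 * k)) / (n : ℝ))
    atTop (nhds θ)}

/-- The cylinder set `[u]` of sequences starting with the finite word `u`
(a list `u` represents the word `u_1 … u_n` with `u_k = u.getD (k-1) false`). -/
def cylinder (u : List Bool) : Set Sigma2 :=
  {x | ∀ i < u.length, x i = u.getD i false}

/-- Initial distribution: `π(0) = 1 - p`, `π(1) = p`. -/
def initProb (p : ℝ) (b : Bool) : ℝ := if b then p else 1 - p

/-- Transition probabilities: `P(0,0) = 1-p`, `P(0,1) = p`, `P(1,0) = q`, `P(1,1) = 1-q`. -/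
def transProb (p q : ℝ) (a b : Bool) : ℝ :=
  if a then (if b then 1 - q else q) else (if b then p else 1 - p)

/-- Markov weight `μ[w] = π(w_1) ∏_{j=1}^{m-1} P(w_j, w_{j+1})` of a finite word `w`. -/
def mweight (p q : ℝ) (w : List Bool) : ℝ :=
  if w = [] then 1
  else initProb p (w.getD 0 false) *
    ∏ j ∈ Finset.range (w.length - 1), transProb p q (w.getD j false) (w.getD (j + 1) false)

/-- The subword `u|_{J(i)} = (u_i, u_{2i}, u_{4i}, …)` of a finite word `u` along the
geometric progression `J(i) = {2^r i : r ≥ 0}`, keeping the indices `2^r i ≤ |u|`. -/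
def subword (u : List Bool) (i : ℕ) : List Bool :=
  ((List.range (u.length + 1)).filter (fun r => 2 ^ r * i ≤ u.length)).map
    (fun r => u.getD (2 ^ r * i - 1) false)

/-- `ℙ_μ[u] = ∏_{i ≤ n, i odd} μ[u|_{J(i)}]` for a finite word `u` of length `n`. -/
def PmuWord (p q : ℝ) (u : List Bool) : ℝ :=
  ∏ i ∈ (Finset.Icc 1 u.length).filter (fun i => Odd i), mweight p q (subword u i)

/-- `Pm` is the (probability) measure `ℙ_μ` on `Σ₂` determined by its values
`ℙ_μ[u] = ∏_{i odd} μ[u|_{J(i)}]` on cylinder sets. -/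
def IsPmu (p q : ℝ) (Pm : Measure Sigma2) : Prop :=
  IsProbabilityMeasure Pm ∧
    ∀ u : List Bool, Pm (cylinder u) = ENNReal.ofReal (PmuWord p q u)

/-- The initial word `x_1^n = x_1 … x_n` of a sequence. -/
def word (x : Sigma2) (n : ℕ) : List Bool := (List.range n).map x

/-- `N_1(x_m^n) = #{k ∈ [m,n] : x_k = 1}`. -/
def N1 (x : Sigma2) (m n : ℕ) : ℕ :=
  ((Finset.Icc m n).filter (fun k => x (k - 1) = true)).card

/-- `N_{ij}(x_1^m) = #{k ≤ m : x_k = i, x_{2k} = j}` (digits `i, j` as booleans). -/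
def Nij (x : Sigma2) (i j : Bool) (m : ℕ) : ℕ :=
  ((Finset.Icc 1 m).filter (fun k => x (k - 1) = i ∧ x (2 * k - 1) = j)).card

/-- `N_{1,odd}(x_1^n) = #{k ≤ n : k odd, x_k = 1}`. -/
def N1odd (x : Sigma2) (n : ℕ) : ℕ :=
  ((Finset.Icc 1 n).filter (fun k => Odd k ∧ x (k - 1) = true)).card

/-- The binary entropy function `H(t) = -t log₂ t - (1-t) log₂ (1-t)`. -/
def Hent (t : ℝ) : ℝ := -(t * Real.logb 2 t) - (1 - t) * Real.logb 2 (1 - t)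

namespace AlphaProof

/-! ### List range filter helper -/

lemma filter_range_lt (t : ℕ) : ∀ (m : ℕ),
    (List.range m).filter (fun r => decide (r < t)) = List.range (min t m) := by
  intro m
  induction m with
  | zero => simp
  | succ m ih =>
    rw [List.range_succ, List.filter_append, ih]
    by_cases h : m < t
    · have : min t (m+1) = m+1 := by omega
      have hm : min t m = m := by omega
      rw [this, hm, List.range_succ]
      simp [h]
    · have : min t (m+1) = min t m := by omega
      rw [this]
      simp [h]

/-! ### subword lemmas -/

lemma pow_le_iff_lt {i t N : ℕ} (ht : 2 ^ t * i = N + 1) :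
    ∀ r, (2 ^ r * i ≤ N ↔ r < t) := by
  intro r
  have hi : 1 ≤ i := by
    rcases Nat.eq_zero_or_pos i with h | h
    · subst h; simp at ht
    · exact h
  constructor
  · intro h
    by_contra hr
    push_neg at hr
    have : 2 ^ t * i ≤ 2 ^ r * i := Nat.mul_le_mul_right i (Nat.pow_le_pow_right (by norm_num) hr)
    omega
  · intro hr
    have h1 : 2 ^ (r + 1) * i ≤ 2 ^ t * i :=
      Nat.mul_le_mul_right i (Nat.pow_le_pow_right (by norm_num) (by omega))
    have h2 : 2 ^ (r + 1) * i = 2 * (2 ^ r * i) := by ring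
    have h3 : 0 < 2 ^ r * i := Nat.mul_pos (Nat.two_pow_pos r) hi
    omega

lemma pow_le_succ_iff_le {i t N : ℕ} (ht : 2 ^ t * i = N + 1) :
    ∀ r, (2 ^ r * i ≤ N + 1 ↔ r ≤ t) := by
  intro r
  rcases Nat.lt_or_ge r (t+1) with h | h
  · constructor
    · intro _; omega
    · intro _
      calc 2 ^ r * i ≤ 2 ^ t * i :=
            Nat.mul_le_mul_right i (Nat.pow_le_pow_right (by norm_num) (by omega))
        _ = N + 1 := ht
  · have h1 : 2 ^ (t + 1) * i ≤ 2 ^ r * i :=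
      Nat.mul_le_mul_right i (Nat.pow_le_pow_right (by norm_num) (by omega))
    have h2 : 2 ^ (t + 1) * i = 2 * (2 ^ t * i) := by ring
    constructor
    · intro hle; omega
    · intro hle; omega

lemma t_le_N {i t N : ℕ} (ht : 2 ^ t * i = N + 1) : t ≤ N := by
  have hi : 1 ≤ i := by
    rcases Nat.eq_zero_or_pos i with h | h
    · subst h; simp at ht
    · exact h
  have h1 : t < 2 ^ t := Nat.lt_two_pow_self
  have h2 : 2 ^ t ≤ 2 ^ t * i := Nat.le_mul_of_pos_right _ hi
  omega

lemma subword_eq_range {u : List Bool} {i t : ℕ} (ht : 2 ^ t * i = u.length + 1) :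
    subword u i = (List.range t).map (fun r => u.getD (2 ^ r * i - 1) false) := by
  unfold subword
  congr 1
  have : ∀ r ∈ List.range (u.length + 1),
      (decide (2 ^ r * i ≤ u.length)) = decide (r < t) := by
    intro r _
    simp only [decide_eq_decide]
    exact pow_le_iff_lt ht r
  rw [List.filter_congr this, filter_range_lt]
  congr 1
  have := t_le_N ht
  omega

lemma subword_append_eq {u : List Bool} {b : Bool} {i t : ℕ}
    (ht : 2 ^ t * i = u.length + 1) :
    subword (u ++ [b]) i = subword u i ++ [b] := by
  have hi : 1 ≤ i := by
    rcases Nat.eq_zero_or_pos i with h | h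
    · subst h; simp at ht
    · exact h
  have hlen : (u ++ [b]).length = u.length + 1 := by simp
  have ht' : 2 ^ t * i = (u ++ [b]).length - 1 + 1 := by rw [hlen]; omega
  have key : subword (u ++ [b]) i
      = (List.range (t+1)).map (fun r => (u ++ [b]).getD (2 ^ r * i - 1) false) := by
    unfold subword
    congr 1
    have : ∀ r ∈ List.range ((u ++ [b]).length + 1),
        (decide (2 ^ r * i ≤ (u ++ [b]).length)) = decide (r < t + 1) := by
      intro r _
      simp only [decide_eq_decide, hlen]
      rw [Nat.lt_succ_iff]
      exact pow_le_succ_iff_le ht r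
    rw [List.filter_congr this, filter_range_lt]
    congr 1
    have := t_le_N ht
    rw [hlen]
    omega
  rw [key, List.range_succ, List.map_append, subword_eq_range ht]
  congr 1
  · apply List.map_congr_left
    intro r hr
    have hr' : r < t := by simpa using hr
    have hle : 2 ^ r * i ≤ u.length := (pow_le_iff_lt ht r).2 hr'
    have hpos : 0 < 2 ^ r * i := Nat.mul_pos (Nat.two_pow_pos r) hi
    exact List.getD_append _ _ _ _ (by omega)
  · simp only [List.map_cons, List.map_nil]
    congr 1
    have h1 : 2 ^ t * i - 1 = u.length := by omega
    rw [h1, List.getD_append_right _ _ _ _ (le_refl _)]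
    simp

lemma subword_append_ne {u : List Bool} {b : Bool} {i : ℕ} (hi : 1 ≤ i)
    (h : ∀ r, 2 ^ r * i ≠ u.length + 1) :
    subword (u ++ [b]) i = subword u i := by
  have hlen : (u ++ [b]).length = u.length + 1 := by simp
  unfold subword
  rw [hlen]
  have hstep : (List.range (u.length + 1 + 1)).filter (fun r => decide (2 ^ r * i ≤ u.length + 1))
      = (List.range (u.length + 1)).filter (fun r => decide (2 ^ r * i ≤ u.length)) := by
    rw [List.range_succ, List.filter_append]
    have hlast : (List.filter (fun r => decide (2 ^ r * i ≤ u.length + 1)) [u.length + 1]) = [] := by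
      have : ¬ (2 ^ (u.length + 1) * i ≤ u.length + 1) := by
        have h1 : u.length + 1 < 2 ^ (u.length + 1) := Nat.lt_two_pow_self
        have h2 : 2 ^ (u.length + 1) ≤ 2 ^ (u.length + 1) * i := Nat.le_mul_of_pos_right _ hi
        omega
      simp [this]
    rw [hlast, List.append_nil]
    apply List.filter_congr
    intro r _
    simp only [decide_eq_decide]
    have := h r
    omega
  rw [hstep]
  apply List.map_congr_left
  intro r hr
  rw [List.mem_filter] at hr
  have hle : 2 ^ r * i ≤ u.length := by simpa using hr.2
  have hpos : 0 < 2 ^ r * i := Nat.mul_pos (Nat.two_pow_pos r) hi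
  exact List.getD_append _ _ _ _ (by omega)

lemma subword_of_gt {u : List Bool} {i : ℕ} (h : u.length < i) : subword u i = [] := by
  unfold subword
  have : (List.range (u.length + 1)).filter (fun r => decide (2 ^ r * i ≤ u.length)) = [] := by
    apply List.filter_eq_nil_iff.2
    intro r _
    simp only [decide_eq_true_eq]
    intro hc
    have h2 : i ≤ 2 ^ r * i := Nat.le_mul_of_pos_left _ (Nat.two_pow_pos r)
    omega
  rw [this]
  simp

end AlphaProof
namespace AlphaProof

lemma mweight_singleton (p q : ℝ) (b : Bool) : mweight p q [b] = initProb p b := by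
  simp [mweight]

lemma mweight_concat (p q : ℝ) (w : List Bool) (b : Bool) (hw : w ≠ []) :
    mweight p q (w ++ [b]) = mweight p q w * transProb p q (w.getD (w.length - 1) false) b := by
  have hlen : 1 ≤ w.length := List.length_pos_iff.2 hw
  have hne : w ++ [b] ≠ [] := by simp
  rw [mweight, if_neg hne, mweight, if_neg hw]
  have hlen2 : (w ++ [b]).length - 1 = w.length := by simp
  rw [hlen2]
  have hsplit : w.length = (w.length - 1) + 1 := by omega
  rw [hsplit, Finset.prod_range_succ, ← hsplit]
  have hget0 : (w ++ [b]).getD 0 false = w.getD 0 false :=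
    List.getD_append _ _ _ _ (by omega)
  have hgetlast : (w ++ [b]).getD (w.length - 1) false = w.getD (w.length - 1) false :=
    List.getD_append _ _ _ _ (by omega)
  have hgettop : (w ++ [b]).getD w.length false = b := by
    rw [List.getD_append_right _ _ _ _ (le_refl _)]
    simp
  have hprod : ∀ j ∈ Finset.range (w.length - 1),
      transProb p q ((w ++ [b]).getD j false) ((w ++ [b]).getD (j+1) false)
      = transProb p q (w.getD j false) (w.getD (j+1) false) := by
    intro j hj
    rw [Finset.mem_range] at hj
    rw [List.getD_append _ _ _ _ (by omega), List.getD_append _ _ _ _ (by omega)]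
  rw [Finset.prod_congr rfl hprod, hget0, hgetlast, hgettop]
  ring

lemma odd_part_unique {i t i' t' N : ℕ} (h : 2 ^ t * i = N) (h' : 2 ^ t' * i' = N)
    (hi : Odd i) (hi' : Odd i') (hN : N ≠ 0) : i = i' ∧ t = t' := by
  have hi0 : i ≠ 0 := by rintro rfl; simp at hi
  have hi'0 : i' ≠ 0 := by rintro rfl; simp at hi'
  have hfi : (Nat.factorization i) 2 = 0 :=
    Nat.factorization_eq_zero_of_not_dvd (by
      rw [Nat.two_dvd_ne_zero, Nat.odd_iff.1 hi])
  have hfi' : (Nat.factorization i') 2 = 0 :=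
    Nat.factorization_eq_zero_of_not_dvd (by
      rw [Nat.two_dvd_ne_zero, Nat.odd_iff.1 hi'])
  have hft : (Nat.factorization N) 2 = t := by
    rw [← h, Nat.factorization_mul (by positivity) hi0]
    simp [Nat.Prime.factorization_self Nat.prime_two, hfi, Nat.factorization_pow]
  have hft' : (Nat.factorization N) 2 = t' := by
    rw [← h', Nat.factorization_mul (by positivity) hi'0]
    simp [Nat.Prime.factorization_self Nat.prime_two, hfi', Nat.factorization_pow]
  have htt : t = t' := by omega
  subst htt
  refine ⟨?_, rfl⟩
  have := h.trans h'.symm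
  exact Nat.eq_of_mul_eq_mul_left (Nat.two_pow_pos t) this

lemma oddFilter_succ_of_odd {N : ℕ} (h : Odd (N + 1)) :
    (Finset.Icc 1 (N + 1)).filter (fun i => Odd i)
      = insert (N + 1) ((Finset.Icc 1 N).filter (fun i => Odd i)) := by
  rw [← Finset.insert_Icc_right_eq_Icc_add_one (by omega), Finset.filter_insert, if_pos h]

lemma oddFilter_succ_of_even {N : ℕ} (h : ¬ Odd (N + 1)) :
    (Finset.Icc 1 (N + 1)).filter (fun i => Odd i)
      = (Finset.Icc 1 N).filter (fun i => Odd i) := by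
  rw [← Finset.insert_Icc_right_eq_Icc_add_one (by omega), Finset.filter_insert, if_neg h]

lemma PmuWord_concat_odd (p q : ℝ) (u : List Bool) (b : Bool) (h : Odd (u.length + 1)) :
    PmuWord p q (u ++ [b]) = PmuWord p q u * initProb p b := by
  set N := u.length with hN
  unfold PmuWord
  have hlen : (u ++ [b]).length = N + 1 := by simp [hN]
  rw [hlen, oddFilter_succ_of_odd h, Finset.prod_insert (by simp)]
  have hsub : subword (u ++ [b]) (N + 1) = [b] := by
    have ht : 2 ^ 0 * (N + 1) = u.length + 1 := by simp [hN]
    rw [subword_append_eq ht, subword_of_gt (by omega)]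
    simp
  rw [hsub, mweight_singleton]
  have hrest : ∀ i ∈ (Finset.Icc 1 N).filter (fun i => Odd i),
      mweight p q (subword (u ++ [b]) i) = mweight p q (subword u i) := by
    intro i hi
    rw [Finset.mem_filter, Finset.mem_Icc] at hi
    rw [subword_append_ne hi.1.1]
    intro r hr
    rcases Nat.eq_zero_or_pos r with h0 | h0
    · subst h0; simp at hr; omega
    · have : 2 ∣ 2 ^ r * i := Dvd.dvd.mul_right (dvd_pow_self 2 (by omega)) i
      rw [hr] at this
      rw [Nat.odd_iff] at h
      omega
  rw [Finset.prod_congr rfl hrest]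
  ring

lemma PmuWord_concat_even (p q : ℝ) (u : List Bool) (b : Bool) (k : ℕ)
    (h : u.length + 1 = 2 * k) :
    PmuWord p q (u ++ [b]) = PmuWord p q u * transProb p q (u.getD (k - 1) false) b := by
  set N := u.length with hN
  have hk : 1 ≤ k := by omega
  have hN1 : 1 ≤ N := by omega
  set t := (Nat.factorization (N + 1)) 2 with htdef
  set i₀ := (N + 1) / 2 ^ t with hidef
  have hfact : 2 ^ t * i₀ = N + 1 := Nat.ordProj_mul_ordCompl_eq_self (N+1) 2
  have hodd : Odd i₀ := by
    rw [Nat.odd_iff, ← Nat.two_dvd_ne_zero]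
    exact Nat.not_dvd_ordCompl Nat.prime_two (by omega)
  have hi₀pos : 0 < i₀ := Nat.ordCompl_pos 2 (by omega)
  have ht1 : 1 ≤ t := Nat.Prime.factorization_pos_of_dvd Nat.prime_two (by omega) ⟨k, by omega⟩
  have hi₀le : i₀ ≤ N := by
    have h2 : 2 ≤ 2 ^ t := by
      calc 2 = 2 ^ 1 := by norm_num
      _ ≤ 2 ^ t := Nat.pow_le_pow_right (by norm_num) ht1
    nlinarith [hfact, hi₀pos]
  have hNodd : ¬ Odd (N + 1) := by rw [Nat.odd_iff]; omega
  unfold PmuWord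
  have hlen : (u ++ [b]).length = N + 1 := by simp [hN]
  rw [hlen, oddFilter_succ_of_even hNodd]
  have hmem : i₀ ∈ (Finset.Icc 1 N).filter (fun i => Odd i) := by
    rw [Finset.mem_filter, Finset.mem_Icc]
    exact ⟨⟨hi₀pos, hi₀le⟩, hodd⟩
  rw [← Finset.mul_prod_erase _ _ hmem, ← Finset.mul_prod_erase _
    (fun i => mweight p q (subword u i)) hmem]
  have hrest : ∀ i ∈ ((Finset.Icc 1 N).filter (fun i => Odd i)).erase i₀,
      mweight p q (subword (u ++ [b]) i) = mweight p q (subword u i) := by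
    intro i hi
    rw [Finset.mem_erase] at hi
    obtain ⟨hne, hi2⟩ := hi
    rw [Finset.mem_filter, Finset.mem_Icc] at hi2
    rw [subword_append_ne hi2.1.1]
    intro r hr
    have := odd_part_unique hr hfact hi2.2 hodd (by omega)
    exact hne this.1
  rw [Finset.prod_congr rfl hrest]
  have hsub : subword (u ++ [b]) i₀ = subword u i₀ ++ [b] := subword_append_eq hfact
  have hform : subword u i₀ = (List.range t).map (fun r => u.getD (2 ^ r * i₀ - 1) false) :=
    subword_eq_range hfact
  have hlensub : (subword u i₀).length = t := by rw [hform]; simp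
  have hne : subword u i₀ ≠ [] := by
    intro hc
    rw [hc] at hlensub
    simp at hlensub
    omega
  rw [hsub, mweight_concat p q _ b hne, hlensub]
  have hlast : (subword u i₀).getD (t - 1) false = u.getD (k - 1) false := by
    rw [hform]
    have htlt : t - 1 < t := by omega
    have h1 : ((List.range t).map (fun r => u.getD (2 ^ r * i₀ - 1) false)).getD (t-1) false
        = u.getD (2 ^ (t-1) * i₀ - 1) false := by
      rw [List.getD_eq_getElem _ _ (by simpa using htlt)]
      rw [List.getElem_map]
      congr 1
      simp [List.getElem_range]
    rw [h1]
    congr 2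
    have : 2 * (2 ^ (t-1) * i₀) = 2 ^ t * i₀ := by
      rw [← mul_assoc, ← pow_succ']
      congr 2
      omega
    omega
  rw [hlast]
  ring

end AlphaProof
namespace AlphaProof

/-! ### Finite sets of words -/

def wordsF : ℕ → Finset (List Bool)
  | 0 => {[]}
  | (n+1) => ((wordsF n) ×ˢ (Finset.univ : Finset Bool)).image (fun ub => ub.1 ++ [ub.2])

lemma mem_wordsF (n : ℕ) : ∀ u : List Bool, u ∈ wordsF n ↔ u.length = n := by
  induction n with
  | zero =>
    intro u
    simp only [wordsF, Finset.mem_singleton]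
    exact ⟨fun h => by simp [h], fun h => List.length_eq_zero_iff.1 h⟩
  | succ n ih =>
    intro u
    rw [wordsF, Finset.mem_image]
    constructor
    · rintro ⟨⟨v, b⟩, hv, rfl⟩
      rw [Finset.mem_product] at hv
      have := (ih v).1 hv.1
      simp [this]
    · intro hu
      have hne : u ≠ [] := by intro h; subst h; simp at hu
      refine ⟨(u.dropLast, u.getLast hne), ?_, ?_⟩
      · rw [Finset.mem_product]
        refine ⟨(ih _).2 ?_, Finset.mem_univ _⟩
        rw [List.length_dropLast]
        omega
      · exact List.dropLast_append_getLast hne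

lemma sum_wordsF_succ {M : Type*} [AddCommMonoid M] (n : ℕ) (f : List Bool → M) :
    ∑ u ∈ wordsF (n+1), f u = ∑ u ∈ wordsF n, ∑ b : Bool, f (u ++ [b]) := by
  rw [wordsF, Finset.sum_image, Finset.sum_product]
  rintro ⟨v, b⟩ hx ⟨v', b'⟩ hy h
  rw [Finset.mem_coe, Finset.mem_product] at hx hy
  have hlen : v.length = v'.length := by
    rw [(mem_wordsF n v).1 hx.1, (mem_wordsF n v').1 hy.1]
  obtain ⟨h1, h2⟩ := List.append_inj h hlen
  simp only at h1
  simp only [List.cons.injEq, and_true] at h2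
  simp only [Prod.mk.injEq]
  exact ⟨h1, h2⟩

/-! ### One-step sums -/

lemma initProb_sum (p : ℝ) : initProb p true + initProb p false = 1 := by
  simp [initProb]

lemma transProb_sum (p q : ℝ) (a : Bool) :
    transProb p q a true + transProb p q a false = 1 := by
  cases a <;> simp [transProb]

lemma transProb_true_eq (p q : ℝ) (a : Bool) :
    transProb p q a true = p + (1 - p - q) * (if a then (1:ℝ) else 0) := by
  cases a <;> (simp [transProb]; try ring)

lemma initProb_true (p : ℝ) : initProb p true = p := rfl

lemma sum_bool_concat (p q : ℝ) (u : List Bool) :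
    ∑ b : Bool, PmuWord p q (u ++ [b]) = PmuWord p q u := by
  rcases Nat.even_or_odd (u.length + 1) with he | ho
  · obtain ⟨k, hk⟩ := he
    have h2 : u.length + 1 = 2 * k := by omega
    rw [Fintype.sum_bool, PmuWord_concat_even p q u true k h2,
      PmuWord_concat_even p q u false k h2, ← mul_add, transProb_sum, mul_one]
  · rw [Fintype.sum_bool, PmuWord_concat_odd p q u true ho, PmuWord_concat_odd p q u false ho,
      ← mul_add, initProb_sum, mul_one]

lemma sum_PmuWord (p q : ℝ) : ∀ n, ∑ u ∈ wordsF n, PmuWord p q u = 1 := by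
  intro n
  induction n with
  | zero => simp [wordsF, PmuWord]
  | succ n ih =>
    rw [sum_wordsF_succ]
    calc ∑ u ∈ wordsF n, ∑ b : Bool, PmuWord p q (u ++ [b])
        = ∑ u ∈ wordsF n, PmuWord p q u := by
          apply Finset.sum_congr rfl
          intro u _
          exact sum_bool_concat p q u
      _ = 1 := ih

/-! ### The indicator of digit `k` and the depth distribution -/

def chi (u : List Bool) (k : ℕ) : ℝ := if u.getD (k-1) false then 1 else 0

def pdseq (p q : ℝ) : ℕ → ℝ
  | 0 => p
  | (r+1) => p + (1 - p - q) * pdseq p q r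

lemma chi_append (u : List Bool) (b : Bool) (k : ℕ) (h : k - 1 < u.length) :
    chi (u ++ [b]) k = chi u k := by
  unfold chi
  rw [List.getD_append _ _ _ _ h]

lemma chi_append_top (u : List Bool) (b : Bool) :
    chi (u ++ [b]) (u.length + 1) = if b then 1 else 0 := by
  unfold chi
  have : u.length + 1 - 1 = u.length := by omega
  rw [this, List.getD_append_right _ _ _ _ (le_refl _)]
  simp

lemma nu_two_mul (k : ℕ) (hk : 1 ≤ k) :
    (Nat.factorization (2 * k)) 2 = (Nat.factorization k) 2 + 1 := by
  rw [Nat.factorization_mul (by norm_num) (by omega)]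
  simp [Nat.Prime.factorization_self Nat.prime_two]
  omega

lemma nu_odd {k : ℕ} (h : Odd k) : (Nat.factorization k) 2 = 0 :=
  Nat.factorization_eq_zero_of_not_dvd (by rw [Nat.two_dvd_ne_zero, Nat.odd_iff.1 h])

/-! ### First moments -/

lemma exp_chi (p q : ℝ) : ∀ n k, 1 ≤ k → k ≤ n → n < 2 * k →
    ∑ u ∈ wordsF n, PmuWord p q u * chi u k = pdseq p q ((Nat.factorization k) 2) := by
  intro n
  induction n with
  | zero => intro k h1 h2 _; omega
  | succ n ih =>
    intro k h1 h2 h3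
    rcases Nat.lt_or_ge k (n+1) with hk | hk
    · -- k ≤ n
      rw [sum_wordsF_succ]
      have step : ∀ u ∈ wordsF n,
          ∑ b : Bool, PmuWord p q (u ++ [b]) * chi (u ++ [b]) k
          = PmuWord p q u * chi u k := by
        intro u hu
        have hlen : u.length = n := (mem_wordsF n u).1 hu
        have hck : ∀ b, chi (u ++ [b]) k = chi u k := by
          intro b; exact chi_append u b k (by omega)
        calc ∑ b : Bool, PmuWord p q (u ++ [b]) * chi (u ++ [b]) k
            = ∑ b : Bool, PmuWord p q (u ++ [b]) * chi u k := by
              apply Finset.sum_congr rfl; intro b _; rw [hck b]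
          _ = (∑ b : Bool, PmuWord p q (u ++ [b])) * chi u k := by rw [Finset.sum_mul]
          _ = PmuWord p q u * chi u k := by rw [sum_bool_concat]
      rw [Finset.sum_congr rfl step]
      exact ih k h1 (by omega) (by omega)
    · -- k = n + 1
      have hkeq : k = n + 1 := by omega
      subst hkeq
      rcases Nat.even_or_odd (n+1) with he | ho
      · -- n+1 = 2k' even
        obtain ⟨k', hk'⟩ := he
        have h2k : n + 1 = 2 * k' := by omega
        have hk'1 : 1 ≤ k' := by omega
        rw [sum_wordsF_succ]
        have step : ∀ u ∈ wordsF n,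
            ∑ b : Bool, PmuWord p q (u ++ [b]) * chi (u ++ [b]) (n+1)
            = PmuWord p q u * (p + (1 - p - q) * chi u k') := by
          intro u hu
          have hlen : u.length = n := (mem_wordsF n u).1 hu
          have h2k' : u.length + 1 = 2 * k' := by omega
          have hct1 : chi (u ++ [true]) (n+1) = 1 := by
            have := chi_append_top u true; rw [hlen] at this; simpa using this
          have hct0 : chi (u ++ [false]) (n+1) = 0 := by
            have := chi_append_top u false; rw [hlen] at this; simpa using this
          rw [Fintype.sum_bool, hct1, hct0,
            PmuWord_concat_even p q u true k' h2k', PmuWord_concat_even p q u false k' h2k',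
            transProb_true_eq]
          unfold chi
          ring
        rw [Finset.sum_congr rfl step]
        have expand : ∑ u ∈ wordsF n, PmuWord p q u * (p + (1 - p - q) * chi u k')
            = p * (∑ u ∈ wordsF n, PmuWord p q u)
              + (1 - p - q) * ∑ u ∈ wordsF n, PmuWord p q u * chi u k' := by
          rw [Finset.mul_sum, Finset.mul_sum, ← Finset.sum_add_distrib]
          apply Finset.sum_congr rfl
          intro u _
          ring
        rw [expand, sum_PmuWord, ih k' hk'1 (by omega) (by omega)]
        have hnu : (Nat.factorization (n+1)) 2 = (Nat.factorization k') 2 + 1 := by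
          rw [h2k]; exact nu_two_mul k' hk'1
        rw [hnu]
        simp only [pdseq]
        try ring
      · -- n+1 odd
        rw [sum_wordsF_succ]
        have step : ∀ u ∈ wordsF n,
            ∑ b : Bool, PmuWord p q (u ++ [b]) * chi (u ++ [b]) (n+1)
            = PmuWord p q u * p := by
          intro u hu
          have hlen : u.length = n := (mem_wordsF n u).1 hu
          have ho' : Odd (u.length + 1) := by rw [hlen]; exact ho
          have hct1 : chi (u ++ [true]) (n+1) = 1 := by
            have := chi_append_top u true; rw [hlen] at this; simpa using this
          have hct0 : chi (u ++ [false]) (n+1) = 0 := by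
            have := chi_append_top u false; rw [hlen] at this; simpa using this
          rw [Fintype.sum_bool, hct1, hct0,
            PmuWord_concat_odd p q u true ho', PmuWord_concat_odd p q u false ho',
            initProb_true]
          ring
        rw [Finset.sum_congr rfl step, ← Finset.sum_mul, sum_PmuWord, nu_odd ho]
        simp only [pdseq]
        try ring

/-! ### Second moments -/

lemma exp_chi2 (p q : ℝ) : ∀ n k l, 1 ≤ k → k < l → l ≤ n → n < 2 * k →
    ∑ u ∈ wordsF n, PmuWord p q u * (chi u k * chi u l)
      = pdseq p q ((Nat.factorization k) 2) * pdseq p q ((Nat.factorization l) 2) := by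
  intro n
  induction n with
  | zero => intro k l h1 h2 h3 _; omega
  | succ n ih =>
    intro k l h1 h2 h3 h4
    rcases Nat.lt_or_ge l (n+1) with hl | hl
    · -- l ≤ n
      rw [sum_wordsF_succ]
      have step : ∀ u ∈ wordsF n,
          ∑ b : Bool, PmuWord p q (u ++ [b]) * (chi (u ++ [b]) k * chi (u ++ [b]) l)
          = PmuWord p q u * (chi u k * chi u l) := by
        intro u hu
        have hlen : u.length = n := (mem_wordsF n u).1 hu
        have hck : ∀ b, chi (u ++ [b]) k = chi u k := fun b => chi_append u b k (by omega)
        have hcl : ∀ b, chi (u ++ [b]) l = chi u l := fun b => chi_append u b l (by omega)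
        calc ∑ b : Bool, PmuWord p q (u ++ [b]) * (chi (u ++ [b]) k * chi (u ++ [b]) l)
            = ∑ b : Bool, PmuWord p q (u ++ [b]) * (chi u k * chi u l) := by
              apply Finset.sum_congr rfl; intro b _; rw [hck b, hcl b]
          _ = (∑ b : Bool, PmuWord p q (u ++ [b])) * (chi u k * chi u l) := by
              rw [Finset.sum_mul]
          _ = PmuWord p q u * (chi u k * chi u l) := by rw [sum_bool_concat]
      rw [Finset.sum_congr rfl step]
      exact ih k l h1 h2 (by omega) (by omega)
    · -- l = n + 1
      have hleq : l = n + 1 := by omega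
      subst hleq
      rcases Nat.even_or_odd (n+1) with he | ho
      · -- n + 1 = 2 l'
        obtain ⟨l', hl'⟩ := he
        have h2l : n + 1 = 2 * l' := by omega
        have hl'1 : 1 ≤ l' := by omega
        have hl'k : l' < k := by omega
        rw [sum_wordsF_succ]
        have step : ∀ u ∈ wordsF n,
            ∑ b : Bool, PmuWord p q (u ++ [b]) * (chi (u ++ [b]) k * chi (u ++ [b]) (n+1))
            = PmuWord p q u * (chi u k * (p + (1 - p - q) * chi u l')) := by
          intro u hu
          have hlen : u.length = n := (mem_wordsF n u).1 hu
          have h2l' : u.length + 1 = 2 * l' := by omega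
          have hck : ∀ b, chi (u ++ [b]) k = chi u k := fun b => chi_append u b k (by omega)
          have hct1 : chi (u ++ [true]) (n+1) = 1 := by
            have := chi_append_top u true; rw [hlen] at this; simpa using this
          have hct0 : chi (u ++ [false]) (n+1) = 0 := by
            have := chi_append_top u false; rw [hlen] at this; simpa using this
          rw [Fintype.sum_bool, hct1, hct0, hck true, hck false,
            PmuWord_concat_even p q u true l' h2l', PmuWord_concat_even p q u false l' h2l',
            transProb_true_eq]
          unfold chi
          ring
        rw [Finset.sum_congr rfl step]
        have expand : ∑ u ∈ wordsF n, PmuWord p q u * (chi u k * (p + (1 - p - q) * chi u l'))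
            = p * (∑ u ∈ wordsF n, PmuWord p q u * chi u k)
              + (1 - p - q) * ∑ u ∈ wordsF n, PmuWord p q u * (chi u l' * chi u k) := by
          rw [Finset.mul_sum, Finset.mul_sum, ← Finset.sum_add_distrib]
          apply Finset.sum_congr rfl
          intro u _
          ring
        rw [expand, exp_chi p q n k h1 (by omega) (by omega),
          ih l' k hl'1 hl'k (by omega) (by omega)]
        have hnu : (Nat.factorization (n+1)) 2 = (Nat.factorization l') 2 + 1 := by
          rw [h2l]; exact nu_two_mul l' hl'1
        rw [hnu]
        simp only [pdseq]
        try ring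
      · -- n+1 odd
        rw [sum_wordsF_succ]
        have step : ∀ u ∈ wordsF n,
            ∑ b : Bool, PmuWord p q (u ++ [b]) * (chi (u ++ [b]) k * chi (u ++ [b]) (n+1))
            = PmuWord p q u * chi u k * p := by
          intro u hu
          have hlen : u.length = n := (mem_wordsF n u).1 hu
          have ho' : Odd (u.length + 1) := by rw [hlen]; exact ho
          have hck : ∀ b, chi (u ++ [b]) k = chi u k := fun b => chi_append u b k (by omega)
          have hct1 : chi (u ++ [true]) (n+1) = 1 := by
            have := chi_append_top u true; rw [hlen] at this; simpa using this
          have hct0 : chi (u ++ [false]) (n+1) = 0 := by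
            have := chi_append_top u false; rw [hlen] at this; simpa using this
          rw [Fintype.sum_bool, hct1, hct0, hck true, hck false,
            PmuWord_concat_odd p q u true ho', PmuWord_concat_odd p q u false ho',
            initProb_true]
          ring
        rw [Finset.sum_congr rfl step]
        have : ∑ u ∈ wordsF n, PmuWord p q u * chi u k * p
            = (∑ u ∈ wordsF n, PmuWord p q u * chi u k) * p := by rw [Finset.sum_mul]
        rw [this, exp_chi p q n k h1 (by omega) (by omega), nu_odd ho]
        simp only [pdseq]
        try ring

end AlphaProof
namespace AlphaProof

section Bounds
variable {p q : ℝ} (hp0 : 0 ≤ p) (hp1 : p ≤ 1) (hq0 : 0 ≤ q) (hq1 : q ≤ 1)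

include hp0 hp1 hq0 hq1

lemma pdseq_mem : ∀ r, 0 ≤ pdseq p q r ∧ pdseq p q r ≤ 1 := by
  intro r
  induction r with
  | zero => exact ⟨hp0, hp1⟩
  | succ r ih =>
    obtain ⟨h0, h1⟩ := ih
    constructor
    · simp only [pdseq]
      nlinarith
    · simp only [pdseq]
      nlinarith

lemma initProb_nonneg (b : Bool) : 0 ≤ initProb p b := by
  cases b <;> simp [initProb] <;> linarith

lemma transProb_nonneg (a b : Bool) : 0 ≤ transProb p q a b := by
  cases a <;> cases b <;> simp [transProb] <;> linarith

lemma mweight_nonneg (w : List Bool) : 0 ≤ mweight p q w := by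
  unfold mweight
  split
  · norm_num
  · exact mul_nonneg (initProb_nonneg hp0 hp1 hq0 hq1 _)
      (Finset.prod_nonneg fun j _ => transProb_nonneg hp0 hp1 hq0 hq1 _ _)

lemma PmuWord_nonneg (u : List Bool) : 0 ≤ PmuWord p q u :=
  Finset.prod_nonneg fun i _ => mweight_nonneg hp0 hp1 hq0 hq1 _

end Bounds

lemma chi_sq (u : List Bool) (k : ℕ) : chi u k * chi u k = chi u k := by
  unfold chi
  split <;> norm_num

/-! ### Variance computation -/

lemma cov_zero (p q : ℝ) {n k l : ℕ} (h1 : 1 ≤ k) (h2 : 1 ≤ l) (hkl : k ≠ l)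
    (h3 : k ≤ n) (h4 : l ≤ n) (h5 : n < 2 * k) (h6 : n < 2 * l) :
    ∑ u ∈ wordsF n, PmuWord p q u *
      ((chi u k - pdseq p q ((Nat.factorization k) 2)) *
        (chi u l - pdseq p q ((Nat.factorization l) 2))) = 0 := by
  set a := pdseq p q ((Nat.factorization k) 2) with ha
  set b := pdseq p q ((Nat.factorization l) 2) with hb
  have expand : ∀ u ∈ wordsF n, PmuWord p q u * ((chi u k - a) * (chi u l - b))
      = PmuWord p q u * (chi u k * chi u l) - a * (PmuWord p q u * chi u l)
        - b * (PmuWord p q u * chi u k) + a * b * PmuWord p q u := by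
    intro u _; ring
  rw [Finset.sum_congr rfl expand]
  rw [Finset.sum_add_distrib, Finset.sum_sub_distrib, Finset.sum_sub_distrib,
    ← Finset.mul_sum, ← Finset.mul_sum, ← Finset.mul_sum]
  have hE2 : ∑ u ∈ wordsF n, PmuWord p q u * (chi u k * chi u l) = a * b := by
    rcases Nat.lt_or_ge k l with h | h
    · rw [exp_chi2 p q n k l h1 h h4 h5]
    · have hlk : l < k := by omega
      have : ∀ u ∈ wordsF n, PmuWord p q u * (chi u k * chi u l)
          = PmuWord p q u * (chi u l * chi u k) := by intro u _; ring
      rw [Finset.sum_congr rfl this, exp_chi2 p q n l k h2 hlk h3 h6, ha, hb]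
      ring
  rw [hE2, exp_chi p q n k h1 h3 h5, exp_chi p q n l h2 h4 h6, sum_PmuWord]
  ring

lemma var_diag (p q : ℝ) {n k : ℕ} (h1 : 1 ≤ k) (h3 : k ≤ n) (h5 : n < 2 * k) :
    ∑ u ∈ wordsF n, PmuWord p q u *
      ((chi u k - pdseq p q ((Nat.factorization k) 2)) *
        (chi u k - pdseq p q ((Nat.factorization k) 2)))
      = pdseq p q ((Nat.factorization k) 2)
        - pdseq p q ((Nat.factorization k) 2) ^ 2 := by
  set a := pdseq p q ((Nat.factorization k) 2) with ha
  have expand : ∀ u ∈ wordsF n, PmuWord p q u * ((chi u k - a) * (chi u k - a))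
      = PmuWord p q u * (chi u k * chi u k) - (2*a) * (PmuWord p q u * chi u k)
        + a * a * PmuWord p q u := by
    intro u _; ring
  rw [Finset.sum_congr rfl expand, Finset.sum_add_distrib, Finset.sum_sub_distrib,
    ← Finset.mul_sum, ← Finset.mul_sum]
  have hE : ∑ u ∈ wordsF n, PmuWord p q u * (chi u k * chi u k)
      = ∑ u ∈ wordsF n, PmuWord p q u * chi u k := by
    apply Finset.sum_congr rfl
    intro u _
    rw [chi_sq]
  rw [hE, exp_chi p q n k h1 h3 h5, sum_PmuWord]
  ring

def Sfun (m : ℕ) (u : List Bool) : ℝ := ∑ k ∈ Finset.Icc (m+1) (2*m), chi u k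

def mubar (p q : ℝ) (m : ℕ) : ℝ :=
  ∑ k ∈ Finset.Icc (m+1) (2*m), pdseq p q ((Nat.factorization k) 2)

lemma sq_sum_eq (I : Finset ℕ) (f : ℕ → ℝ) :
    (∑ k ∈ I, f k) ^ 2 = ∑ k ∈ I, ∑ l ∈ I, f k * f l := by
  rw [sq, Finset.sum_mul_sum]

lemma var_sum_le (p q : ℝ) (hp0 : 0 ≤ p) (hp1 : p ≤ 1) (hq0 : 0 ≤ q) (hq1 : q ≤ 1) (m : ℕ) :
    ∑ u ∈ wordsF (2*m), PmuWord p q u * (Sfun m u - mubar p q m) ^ 2 ≤ m / 4 := by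
  set I := Finset.Icc (m+1) (2*m) with hI
  set pd : ℕ → ℝ := fun k => pdseq p q ((Nat.factorization k) 2) with hpd
  have hdiff : ∀ u, Sfun m u - mubar p q m = ∑ k ∈ I, (chi u k - pd k) := by
    intro u
    rw [Sfun, mubar, ← Finset.sum_sub_distrib]
  have swap : ∑ u ∈ wordsF (2*m), PmuWord p q u * (Sfun m u - mubar p q m) ^ 2
      = ∑ k ∈ I, ∑ l ∈ I, ∑ u ∈ wordsF (2*m),
          PmuWord p q u * ((chi u k - pd k) * (chi u l - pd l)) := by
    have h1 : ∀ u ∈ wordsF (2*m), PmuWord p q u * (Sfun m u - mubar p q m) ^ 2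
        = ∑ k ∈ I, ∑ l ∈ I, PmuWord p q u * ((chi u k - pd k) * (chi u l - pd l)) := by
      intro u _
      rw [hdiff u, sq_sum_eq, Finset.mul_sum]
      apply Finset.sum_congr rfl
      intro k _
      rw [Finset.mul_sum]
    rw [Finset.sum_congr rfl h1, Finset.sum_comm]
    apply Finset.sum_congr rfl
    intro k _
    rw [Finset.sum_comm]
  rw [swap]
  have hmem : ∀ k ∈ I, 1 ≤ k ∧ k ≤ 2*m ∧ 2*m < 2*k := by
    intro k hk
    rw [hI, Finset.mem_Icc] at hk
    omega
  have inner : ∀ k ∈ I, ∑ l ∈ I, ∑ u ∈ wordsF (2*m),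
      PmuWord p q u * ((chi u k - pd k) * (chi u l - pd l)) ≤ 1/4 := by
    intro k hk
    obtain ⟨hk1, hk2, hk3⟩ := hmem k hk
    have : ∑ l ∈ I, ∑ u ∈ wordsF (2*m),
        PmuWord p q u * ((chi u k - pd k) * (chi u l - pd l))
        = pd k - pd k ^ 2 := by
      rw [Finset.sum_eq_single_of_mem k hk]
      · exact var_diag p q hk1 hk2 hk3
      · intro l hl hlk
        obtain ⟨hl1, hl2, hl3⟩ := hmem l hl
        exact cov_zero p q hk1 hl1 (by omega) hk2 hl2 hk3 hl3
    rw [this]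
    have hb : 0 ≤ pd k ∧ pd k ≤ 1 := pdseq_mem hp0 hp1 hq0 hq1 ((Nat.factorization k) 2)
    nlinarith [sq_nonneg (pd k - 1/2)]
  calc ∑ k ∈ I, ∑ l ∈ I, ∑ u ∈ wordsF (2*m),
        PmuWord p q u * ((chi u k - pd k) * (chi u l - pd l))
      ≤ ∑ k ∈ I, (1/4 : ℝ) := Finset.sum_le_sum inner
    _ = (I.card : ℝ) * (1/4) := by rw [Finset.sum_const, nsmul_eq_mul]
    _ ≤ m / 4 := by
        have : I.card = m := by rw [hI, Nat.card_Icc]; omega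
        rw [this]
        ring_nf
        try linarith

lemma cheb_bound (p q : ℝ) (hp0 : 0 ≤ p) (hp1 : p ≤ 1) (hq0 : 0 ≤ q) (hq1 : q ≤ 1)
    (m : ℕ) (hm : 1 ≤ m) (ε : ℝ) (hε : 0 < ε) :
    ∑ u ∈ (wordsF (2*m)).filter (fun u => ε * m < |Sfun m u - mubar p q m|), PmuWord p q u
      ≤ 1 / (4 * ε^2 * m) := by
  set T := (wordsF (2*m)).filter (fun u => ε * m < |Sfun m u - mubar p q m|) with hT
  have hεm : (0:ℝ) < ε * m := by
    have : (1:ℝ) ≤ m := by exact_mod_cast hm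
    nlinarith
  have step1 : ∑ u ∈ T, PmuWord p q u
      ≤ ∑ u ∈ T, PmuWord p q u * ((Sfun m u - mubar p q m)^2 / (ε*m)^2) := by
    apply Finset.sum_le_sum
    intro u hu
    rw [hT, Finset.mem_filter] at hu
    have habs : ε * m < |Sfun m u - mubar p q m| := hu.2
    have hW := PmuWord_nonneg hp0 hp1 hq0 hq1 u
    have hsq : (ε*m)^2 < (Sfun m u - mubar p q m)^2 := by
      have := sq_abs (Sfun m u - mubar p q m)
      nlinarith [abs_nonneg (Sfun m u - mubar p q m)]
    have hone : 1 ≤ (Sfun m u - mubar p q m)^2 / (ε*m)^2 := by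
      rw [le_div_iff₀ (by positivity)]
      linarith
    nlinarith
  have step2 : ∑ u ∈ T, PmuWord p q u * ((Sfun m u - mubar p q m)^2 / (ε*m)^2)
      ≤ ∑ u ∈ wordsF (2*m), PmuWord p q u * ((Sfun m u - mubar p q m)^2 / (ε*m)^2) := by
    apply Finset.sum_le_sum_of_subset_of_nonneg (Finset.filter_subset _ _)
    intro u _ _
    have hW := PmuWord_nonneg hp0 hp1 hq0 hq1 u
    positivity
  have step3 : ∑ u ∈ wordsF (2*m), PmuWord p q u * ((Sfun m u - mubar p q m)^2 / (ε*m)^2)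
      = (∑ u ∈ wordsF (2*m), PmuWord p q u * (Sfun m u - mubar p q m)^2) / (ε*m)^2 := by
    rw [Finset.sum_div]
    apply Finset.sum_congr rfl
    intro u _
    ring
  have step4 : (∑ u ∈ wordsF (2*m), PmuWord p q u * (Sfun m u - mubar p q m)^2) / (ε*m)^2
      ≤ (m/4) / (ε*m)^2 := by
    apply div_le_div_of_nonneg_right ?_ (by positivity)
    · exact var_sum_le p q hp0 hp1 hq0 hq1 m
  have step5 : ((m:ℝ)/4) / (ε*m)^2 = 1 / (4 * ε^2 * m) := by
    have hm0 : (m:ℝ) ≠ 0 := by positivity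
    field_simp
  linarith [step1, step2, le_of_eq step3, step4, le_of_eq step5]
end AlphaProof
namespace AlphaProof

/-! ### Words of sequences and cylinders -/

lemma word_length (x : Sigma2) (n : ℕ) : (word x n).length = n := by simp [word]

lemma word_getD (x : Sigma2) (n i : ℕ) (h : i < n) : (word x n).getD i false = x i := by
  have hlen : i < (word x n).length := by rw [word_length]; exact h
  rw [List.getD_eq_getElem _ _ hlen]
  simp [word]

lemma word_mem_wordsF (x : Sigma2) (n : ℕ) : word x n ∈ wordsF n :=
  (mem_wordsF n _).2 (word_length x n)

lemma cylinder_eq_word (u : List Bool) :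
    _root_.cylinder u = {x : Sigma2 | word x u.length = u} := by
  ext x
  simp only [_root_.cylinder, Set.mem_setOf_eq]
  constructor
  · intro h
    apply List.ext_getElem (by rw [word_length])
    intro i h1 h2
    have hi : i < u.length := h2
    simp only [word, List.getElem_map, List.getElem_range]
    rw [h i hi]
    exact List.getD_eq_getElem u false h2
  · intro h i hi
    rw [← h, word_getD x _ i hi]

lemma measurableSet_word_eq (n : ℕ) (u : List Bool) :
    MeasurableSet {x : Sigma2 | word x n = u} := by
  by_cases h : u.length = n
  · have : {x : Sigma2 | word x n = u} = ⋂ i ∈ Finset.range n, {x : Sigma2 | x i = u.getD i false} := by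
      ext x
      simp only [Set.mem_setOf_eq, Set.mem_iInter, Finset.mem_range]
      constructor
      · intro hx i hi
        rw [← hx, word_getD x n i hi]
      · intro hx
        apply List.ext_getElem (by rw [word_length, h])
        intro i h1 h2
        have hi : i < n := by rw [word_length] at h1; exact h1
        simp only [word, List.getElem_map, List.getElem_range]
        rw [hx i hi]
        exact List.getD_eq_getElem u false h2
    rw [this]
    apply Finset.measurableSet_biInter
    intro i _
    have : {x : Sigma2 | x i = u.getD i false}
        = (fun x : Sigma2 => x i) ⁻¹' {u.getD i false} := rfl
    rw [this]
    exact (measurable_pi_apply i) (measurableSet_singleton _)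
  · have : {x : Sigma2 | word x n = u} = ∅ := by
      ext x
      simp only [Set.mem_setOf_eq, Set.mem_empty_iff_false, iff_false]
      intro hx
      rw [← hx, word_length] at h
      exact h rfl
    rw [this]
    exact MeasurableSet.empty

lemma Pm_word_event (p q : ℝ) (hp0 : 0 ≤ p) (hp1 : p ≤ 1) (hq0 : 0 ≤ q) (hq1 : q ≤ 1)
    (Pm : Measure Sigma2) (hPm : IsPmu p q Pm) (n : ℕ) (T : Finset (List Bool))
    (hT : T ⊆ wordsF n) :
    Pm {x : Sigma2 | word x n ∈ T} = ENNReal.ofReal (∑ u ∈ T, PmuWord p q u) := by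
  have hset : {x : Sigma2 | word x n ∈ T} = ⋃ u ∈ T, {x : Sigma2 | word x n = u} := by
    ext x
    simp
  rw [hset, measure_biUnion_finset ?hdisj (fun u _ => measurableSet_word_eq n u)]
  · rw [ENNReal.ofReal_sum_of_nonneg (fun u _ => PmuWord_nonneg hp0 hp1 hq0 hq1 u)]
    apply Finset.sum_congr rfl
    intro u hu
    have hlen : u.length = n := (mem_wordsF n u).1 (hT hu)
    have : {x : Sigma2 | word x n = u} = _root_.cylinder u := by
      rw [cylinder_eq_word, hlen]
    rw [this, hPm.2 u]
  case hdisj =>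
    intro u hu v hv huv
    simp only [Function.onFun]
    apply Set.disjoint_left.2
    intro x hxu hxv
    simp only [Set.mem_setOf_eq] at hxu hxv
    exact huv (hxu.symm.trans hxv)

/-! ### From `N1` to word sums -/

lemma N1_cast_eq_Sfun (x : Sigma2) (m : ℕ) :
    (N1 x (m+1) (2*m) : ℝ) = Sfun m (word x (2*m)) := by
  unfold N1 Sfun
  rw [Finset.card_filter]
  push_cast
  apply Finset.sum_congr rfl
  intro k hk
  rw [Finset.mem_Icc] at hk
  unfold chi
  rw [word_getD x (2*m) (k-1) (by omega)]

lemma Pm_cheb (p q : ℝ) (hp0 : 0 ≤ p) (hp1 : p ≤ 1) (hq0 : 0 ≤ q) (hq1 : q ≤ 1)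
    (Pm : Measure Sigma2) (hPm : IsPmu p q Pm) (m : ℕ) (hm : 1 ≤ m) (ε : ℝ) (hε : 0 < ε) :
    Pm {x : Sigma2 | ε * m < |(N1 x (m+1) (2*m) : ℝ) - mubar p q m|}
      ≤ ENNReal.ofReal (1 / (4 * ε^2 * m)) := by
  have hset : {x : Sigma2 | ε * m < |(N1 x (m+1) (2*m) : ℝ) - mubar p q m|}
      = {x : Sigma2 | word x (2*m) ∈
          (wordsF (2*m)).filter (fun u => ε * m < |Sfun m u - mubar p q m|)} := by
    ext x
    simp only [Set.mem_setOf_eq, Finset.mem_filter]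
    rw [N1_cast_eq_Sfun]
    constructor
    · intro h; exact ⟨word_mem_wordsF x _, h⟩
    · intro h; exact h.2
  rw [hset, Pm_word_event p q hp0 hp1 hq0 hq1 Pm hPm (2*m) _ (Finset.filter_subset _ _)]
  exact ENNReal.ofReal_le_ofReal (cheb_bound p q hp0 hp1 hq0 hq1 m hm ε hε)

end AlphaProof
namespace AlphaProof

/-! ### The geometric sums along 2-adic valuations -/

def Asum (lam : ℝ) (N : ℕ) : ℝ := ∑ k ∈ Finset.Icc 1 N, lam ^ ((Nat.factorization k) 2)

lemma Asum_zero (lam : ℝ) : Asum lam 0 = 0 := by simp [Asum]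

lemma Asum_even (lam : ℝ) : ∀ N, Asum lam (2*N) = N + lam * Asum lam N := by
  intro N
  induction N with
  | zero => simp [Asum]
  | succ N ih =>
    have h1 : 2 * (N + 1) = (2 * N + 1) + 1 := by ring
    unfold Asum
    rw [h1, Finset.sum_Icc_succ_top (by omega), Finset.sum_Icc_succ_top (by omega)]
    have hodd : (Nat.factorization (2*N+1)) 2 = 0 := nu_odd ⟨N, by omega⟩
    have heven : (Nat.factorization (2*N+1+1)) 2 = (Nat.factorization (N+1)) 2 + 1 := by
      have : 2*N+1+1 = 2*(N+1) := by ring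
      rw [this]
      exact nu_two_mul (N+1) (by omega)
    rw [hodd, heven]
    unfold Asum at ih
    rw [ih, Finset.sum_Icc_succ_top (by omega)]
    push_cast
    ring

lemma err_bound (lam : ℝ) (hlam : |lam| ≤ 1) :
    ∀ N : ℕ, |Asum lam N - N / (2 - lam)| ≤ (Nat.log 2 N : ℝ) + 1 := by
  have h2 : (1:ℝ) ≤ 2 - lam := by
    rw [abs_le] at hlam
    linarith
  have h2' : (2:ℝ) - lam ≠ 0 := by linarith
  have hinv : 0 ≤ 1/(2-lam) ∧ 1/(2-lam) ≤ 1 := by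
    constructor
    · positivity
    · rw [div_le_one (by linarith)]
      linarith
  have hc : |1 - 1/(2-lam)| ≤ 1 := by
    rw [abs_le]
    constructor <;> [linarith [hinv.2]; linarith [hinv.1]]
  intro N
  induction N using Nat.strong_induction_on with
  | _ N ih =>
    rcases Nat.lt_or_ge N 2 with hN | hN
    · interval_cases N
      · simp [Asum_zero]
      · have hA1 : Asum lam 1 = 1 := by
          unfold Asum
          norm_num
        rw [hA1]
        have hlog : Nat.log 2 1 = 0 := by simp
        rw [hlog]
        push_cast
        calc |1 - 1/(2-lam)| ≤ 1 := hc
          _ ≤ 0 + 1 := by norm_num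
    · set M := N / 2 with hM
      have hM1 : 1 ≤ M := by omega
      have hMN : M < N := by omega
      have ihM := ih M hMN
      have hlogM : Nat.log 2 (2*M) = Nat.log 2 M + 1 := by
        have := Nat.log_mul_base (b := 2) (n := M) (by norm_num) (by omega)
        rw [mul_comm] at this
        exact this
      have hlogmono : Nat.log 2 (2*M) ≤ Nat.log 2 N := Nat.log_mono_right (by omega)
      have herr2M : Asum lam (2*M) - (2*M : ℕ) / (2 - lam)
          = lam * (Asum lam M - M / (2-lam)) := by
        rw [Asum_even]
        push_cast
        field_simp
        ring
      have habs2M : |Asum lam (2*M) - (2*M : ℕ) / (2 - lam)| ≤ (Nat.log 2 M : ℝ) + 1 := by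
        rw [herr2M, abs_mul]
        calc |lam| * |Asum lam M - M / (2-lam)| ≤ 1 * |Asum lam M - M / (2-lam)| := by
              apply mul_le_mul_of_nonneg_right hlam (abs_nonneg _)
          _ = |Asum lam M - M / (2-lam)| := by ring
          _ ≤ (Nat.log 2 M : ℝ) + 1 := ihM
      rcases Nat.even_or_odd N with he | ho
      · have hNeq : N = 2*M := by
          obtain ⟨t, ht⟩ := he
          omega
        rw [hNeq]
        calc |Asum lam (2*M) - (2*M : ℕ) / (2 - lam)| ≤ (Nat.log 2 M : ℝ) + 1 := habs2M
          _ ≤ (Nat.log 2 (2*M) : ℝ) + 1 := by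
              have : Nat.log 2 M ≤ Nat.log 2 (2*M) := Nat.log_mono_right (by omega)
              exact_mod_cast add_le_add_left (Nat.cast_le.2 this) 1
      · have hNeq : N = 2*M + 1 := by
          obtain ⟨t, ht⟩ := ho
          omega
        have hAodd : Asum lam N = Asum lam (2*M) + 1 := by
          unfold Asum
          rw [hNeq, Finset.sum_Icc_succ_top (by omega)]
          rw [nu_odd ⟨M, by omega⟩]
          norm_num
        have hsplit : Asum lam N - (N:ℝ)/(2-lam)
            = (Asum lam (2*M) - (2*M : ℕ)/(2-lam)) + (1 - 1/(2-lam)) := by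
          rw [hAodd, hNeq]
          push_cast
          field_simp
          ring
        rw [hsplit]
        calc |(Asum lam (2*M) - (2*M : ℕ)/(2-lam)) + (1 - 1/(2-lam))|
            ≤ |Asum lam (2*M) - (2*M : ℕ)/(2-lam)| + |1 - 1/(2-lam)| := abs_add_le _ _
          _ ≤ ((Nat.log 2 M : ℝ) + 1) + 1 := add_le_add habs2M hc
          _ ≤ (Nat.log 2 N : ℝ) + 1 := by
              have : Nat.log 2 M + 1 ≤ Nat.log 2 N := by
                rw [← hlogM]
                exact hlogmono
              have := (Nat.cast_le (α := ℝ)).2 this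
              push_cast at this
              linarith

/-! ### `Nat.log / n → 0` -/

lemma tendsto_log_div : Tendsto (fun m : ℕ => (Nat.log 2 m : ℝ) / m) atTop (nhds 0) := by
  have h1 : Tendsto (fun x : ℝ => Real.log x / x) atTop (nhds 0) :=
    Real.isLittleO_log_id_atTop.tendsto_div_nhds_zero
  have h2 : Tendsto (fun m : ℕ => Real.log m / m) atTop (nhds 0) :=
    h1.comp tendsto_natCast_atTop_atTop
  have h3 : Tendsto (fun m : ℕ => (1/Real.log 2) * (Real.log m / m)) atTop (nhds 0) := by
    have := h2.const_mul (1/Real.log 2)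
    simpa using this
  apply squeeze_zero' ?h0 ?hle h3
  case h0 =>
    filter_upwards [eventually_ge_atTop 1] with m hm
    positivity
  case hle =>
    filter_upwards [eventually_ge_atTop 1] with m hm
    have hm1 : (1:ℝ) ≤ m := by exact_mod_cast hm
    have hlog2 : 0 < Real.log 2 := Real.log_pos (by norm_num)
    have key : (Nat.log 2 m : ℝ) * Real.log 2 ≤ Real.log m := by
      have hpow : (2:ℕ) ^ (Nat.log 2 m) ≤ m := Nat.pow_log_le_self 2 (by omega)
      have : Real.log ((2:ℝ) ^ (Nat.log 2 m)) ≤ Real.log m := by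
        apply Real.log_le_log (by positivity)
        exact_mod_cast hpow
      rwa [Real.log_pow] at this
    calc (Nat.log 2 m : ℝ) / m ≤ (Real.log m / Real.log 2) / m := by
          gcongr
          · rw [le_div_iff₀ hlog2]
            exact key
      _ = (1/Real.log 2) * (Real.log m / m) := by ring
end AlphaProof
namespace AlphaProof

lemma pdseq_closed (p q : ℝ) (hpq : p + q ≠ 0) :
    ∀ r, pdseq p q r = p/(p+q) + (p - p/(p+q)) * (1-p-q)^r := by
  intro r
  induction r with
  | zero =>
    simp only [pdseq, pow_zero, mul_one]
    field_simp
    ring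
  | succ r ih =>
    simp only [pdseq, ih, pow_succ]
    field_simp
    ring

lemma mubar_formula (p q : ℝ) (hpq : p + q ≠ 0) (m : ℕ) :
    mubar p q m = (p/(p+q)) * m
      + (p - p/(p+q)) * (Asum (1-p-q) (2*m) - Asum (1-p-q) m) := by
  unfold mubar
  have hcongr : ∀ k ∈ Finset.Icc (m+1) (2*m),
      pdseq p q ((Nat.factorization k) 2)
        = p/(p+q) + (p - p/(p+q)) * (1-p-q)^((Nat.factorization k) 2) :=
    fun k _ => pdseq_closed p q hpq _
  rw [Finset.sum_congr rfl hcongr, Finset.sum_add_distrib, Finset.sum_const, ← Finset.mul_sum]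
  have hcard : (Finset.Icc (m+1) (2*m)).card = m := by
    rw [Nat.card_Icc]; omega
  have hsum : ∑ k ∈ Finset.Icc (m+1) (2*m), (1-p-q)^((Nat.factorization k) 2)
      = Asum (1-p-q) (2*m) - Asum (1-p-q) m := by
    have hIcc : ∀ N : ℕ, Finset.Icc 1 N = Finset.Ioc 0 N := fun N => Finset.Icc_add_one_left_eq_Ioc 0 N
    have hIoc : Finset.Icc (m+1) (2*m) = Finset.Ioc m (2*m) := Finset.Icc_add_one_left_eq_Ioc m (2*m)
    have hcons := Finset.sum_Ioc_consecutive
      (fun k => (1-p-q)^((Nat.factorization k) 2)) (Nat.zero_le m) (by omega : m ≤ 2*m)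
    unfold Asum
    rw [hIcc, hIcc, hIoc, ← hcons]
    ring
  rw [hcard, hsum, nsmul_eq_mul]
  ring

lemma tendsto_Asum_diff (lam : ℝ) (hlam : |lam| ≤ 1) :
    Tendsto (fun m : ℕ => (Asum lam (2*m) - Asum lam m) / m) atTop (nhds (1/(2-lam))) := by
  have h2 : (1:ℝ) ≤ 2 - lam := by rw [abs_le] at hlam; linarith
  rw [← tendsto_sub_nhds_zero_iff]
  have hg : Tendsto (fun m : ℕ => (2*(Nat.log 2 m : ℝ) + 3)/m) atTop (nhds 0) := by
    have h1 : Tendsto (fun m : ℕ => 2 * ((Nat.log 2 m : ℝ)/m) + 3 * (1/m)) atTop (nhds 0) := by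
      have ha := tendsto_log_div.const_mul (2:ℝ)
      have hb : Tendsto (fun m : ℕ => (1:ℝ)/m) atTop (nhds 0) := tendsto_one_div_atTop_nhds_zero_nat
      have hc := hb.const_mul (3:ℝ)
      have := ha.add hc
      simpa using this
    apply h1.congr'
    filter_upwards [eventually_ge_atTop 1] with m hm
    have hm0 : (m:ℝ) ≠ 0 := by
      have : (1:ℝ) ≤ m := by exact_mod_cast hm
      linarith
    field_simp
    try ring
  apply squeeze_zero_norm' ?bound hg
  case bound =>
    filter_upwards [eventually_ge_atTop 1] with m hm
    have hm0 : (0:ℝ) < m := by exact_mod_cast hm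
    have hiden : (Asum lam (2*m) - Asum lam m) / m - 1/(2-lam)
        = ((Asum lam (2*m) - (2*m : ℕ)/(2-lam)) - (Asum lam m - (m:ℕ)/(2-lam))) / m := by
      push_cast
      field_simp
      ring
    rw [hiden]
    have e1 := err_bound lam hlam (2*m)
    have e2 := err_bound lam hlam m
    have hlog2m : Nat.log 2 (2*m) = Nat.log 2 m + 1 := by
      have := Nat.log_mul_base (b := 2) (n := m) (by norm_num) (by omega)
      rw [mul_comm] at this
      exact this
    rw [Real.norm_eq_abs, abs_div, abs_of_pos hm0]
    have hnum : |(Asum lam (2*m) - (2*m : ℕ)/(2-lam)) - (Asum lam m - (m:ℕ)/(2-lam))|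
        ≤ 2*(Nat.log 2 m : ℝ) + 3 := by
      calc |(Asum lam (2*m) - (2*m : ℕ)/(2-lam)) - (Asum lam m - (m:ℕ)/(2-lam))|
          ≤ |Asum lam (2*m) - (2*m : ℕ)/(2-lam)| + |Asum lam m - (m:ℕ)/(2-lam)| :=
            abs_sub _ _
        _ ≤ ((Nat.log 2 (2*m) : ℝ) + 1) + ((Nat.log 2 m : ℝ) + 1) := add_le_add e1 e2
        _ ≤ 2*(Nat.log 2 m : ℝ) + 3 := by
            rw [hlog2m]
            push_cast
            linarith
    gcongr

lemma tendsto_mubar (p q : ℝ) (hp0 : 0 < p) (hp1 : p < 1) (hq0 : 0 ≤ q) (hq1 : q ≤ 1) :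
    Tendsto (fun m : ℕ => mubar p q m / m) atTop (nhds (2*p/(1+p+q))) := by
  set lam := 1 - p - q with hlamdef
  have hlam : |lam| ≤ 1 := by
    rw [abs_le]
    constructor <;> [simp only [hlamdef]; simp only [hlamdef]] <;> linarith
  have hpq : p + q ≠ 0 := by positivity
  have hpq' : (0:ℝ) < p + q := by positivity
  have h1pq : (0:ℝ) < 1 + p + q := by linarith
  have h2lam : 2 - lam = 1 + p + q := by rw [hlamdef]; ring
  have hG := tendsto_Asum_diff lam hlam
  have hT : Tendsto (fun m : ℕ => p/(p+q)
      + (p - p/(p+q)) * ((Asum lam (2*m) - Asum lam m) / m)) atTop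
      (nhds (p/(p+q) + (p - p/(p+q)) * (1/(2-lam)))) :=
    ((hG.const_mul _).const_add _)
  have hval : p/(p+q) + (p - p/(p+q)) * (1/(2-lam)) = 2*p/(1+p+q) := by
    rw [h2lam]
    field_simp
    ring
  rw [hval] at hT
  apply hT.congr'
  filter_upwards [eventually_ge_atTop 1] with m hm
  have hm0 : (m:ℝ) ≠ 0 := by
    have : (1:ℝ) ≤ m := by exact_mod_cast hm
    linarith
  rw [mubar_formula p q hpq m]
  field_simp
  ring

end AlphaProof
namespace AlphaProof

lemma N1_split (x : Sigma2) {a b c : ℕ} (h1 : a ≤ b) (h2 : b ≤ c) :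
    N1 x (a+1) c = N1 x (a+1) b + N1 x (b+1) c := by
  unfold N1
  rw [Finset.Icc_add_one_left_eq_Ioc, Finset.Icc_add_one_left_eq_Ioc, Finset.Icc_add_one_left_eq_Ioc,
    ← Finset.Ioc_union_Ioc_eq_Ioc h1 h2, Finset.filter_union]
  apply Finset.card_union_of_disjoint
  apply Finset.disjoint_filter_filter
  rw [Finset.disjoint_left]
  intro k hk hk'
  rw [Finset.mem_Ioc] at hk hk'
  omega

lemma N1_le (x : Sigma2) (a b : ℕ) : N1 x (a+1) b ≤ b - a := by
  unfold N1
  calc ((Finset.Icc (a+1) b).filter _).card ≤ (Finset.Icc (a+1) b).card :=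
        Finset.card_filter_le _ _
    _ = b + 1 - (a+1) := Nat.card_Icc _ _
    _ ≤ b - a := by omega

set_option maxHeartbeats 1000000 in
lemma sandwich (x : Sigma2) (θ : ℝ) (hθ : 0 ≤ θ) (mb : ℕ → ℝ)
    (hmu : Tendsto (fun m : ℕ => mb m / m) atTop (nhds θ))
    (hx : ∀ c : ℕ, ∀ᶠ j : ℕ in atTop,
      |(N1 x (j^2+1) (2*j^2) : ℝ) - mb (j^2)| ≤ (j^2 : ℝ)/(c+1)) :
    Tendsto (fun m : ℕ => (N1 x (m+1) (2*m) : ℝ) / m) atTop (nhds θ) := by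
  rw [Metric.tendsto_atTop]
  intro ε hε
  obtain ⟨c, hc⟩ := exists_nat_one_div_lt (show (0:ℝ) < ε/4 by linarith)
  obtain ⟨J1, hJ1⟩ := Filter.eventually_atTop.1 (hx c)
  obtain ⟨J2, hJ2⟩ := Metric.tendsto_atTop.1 hmu (ε/4) (by linarith)
  obtain ⟨K, hK⟩ := exists_nat_gt ((16 + 8*θ)/ε)
  refine ⟨(J1 + J2 + K + 1)^2, fun m hm => ?_⟩
  set J := J1 + J2 + K + 1 with hJdef
  obtain ⟨j, hjdef⟩ : ∃ j, j = Nat.sqrt m := ⟨_, rfl⟩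
  have hjJ : J ≤ j := by
    rw [hjdef, Nat.le_sqrt]
    calc J * J = J^2 := by ring
      _ ≤ m := hm
  have hj1 : 1 ≤ j := by omega
  have hjsq : j^2 ≤ m := by rw [hjdef]; exact Nat.sqrt_le' m
  have hexp : (j+1)^2 = j^2 + 2*j + 1 := by ring
  have hm2 : m ≤ j^2 + 2*j := by
    have h0 := Nat.lt_succ_sqrt' m
    rw [← hjdef] at h0
    have h0' : m < (j+1)^2 := by
      calc m < j.succ ^ 2 := h0
        _ = (j+1)^2 := by rw [Nat.succ_eq_add_one]
    omega
  have hm1 : 1 ≤ m := by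
    calc 1 ≤ j^2 := Nat.one_le_pow _ _ (by omega)
      _ ≤ m := hjsq
  -- splits
  have hsplit1 : N1 x (j^2+1) (2*m) = N1 x (j^2+1) m + N1 x (m+1) (2*m) :=
    N1_split x hjsq (by omega)
  have hsplit2 : N1 x (j^2+1) (2*m) = N1 x (j^2+1) (2*j^2) + N1 x (2*j^2+1) (2*m) :=
    N1_split x (by omega) (by omega)
  have hb1 : N1 x (j^2+1) m ≤ 2*j := by
    calc N1 x (j^2+1) m ≤ m - j^2 := N1_le x _ _
      _ ≤ 2*j := by omega
  have hb2 : N1 x (2*j^2+1) (2*m) ≤ 4*j := by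
    calc N1 x (2*j^2+1) (2*m) ≤ 2*m - 2*j^2 := N1_le x _ _
      _ ≤ 4*j := by omega
  -- real versions
  set Sm : ℝ := (N1 x (m+1) (2*m) : ℝ) with hSm
  set Sj : ℝ := (N1 x (j^2+1) (2*j^2) : ℝ) with hSj
  have e1 : ((N1 x (j^2+1) (2*m) : ℕ) : ℝ) = (N1 x (j^2+1) m : ℕ) + Sm := by
    rw [hSm]; exact_mod_cast congrArg (fun t : ℕ => (t:ℝ)) hsplit1
  have e2 : ((N1 x (j^2+1) (2*m) : ℕ) : ℝ) = Sj + (N1 x (2*j^2+1) (2*m) : ℕ) := by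
    rw [hSj]; exact_mod_cast congrArg (fun t : ℕ => (t:ℝ)) hsplit2
  have hrb1 : ((N1 x (j^2+1) m : ℕ) : ℝ) ≤ 2*j := by exact_mod_cast hb1
  have hrb2 : ((N1 x (2*j^2+1) (2*m) : ℕ) : ℝ) ≤ 4*j := by exact_mod_cast hb2
  have hrn1 : (0:ℝ) ≤ ((N1 x (j^2+1) m : ℕ) : ℝ) := Nat.cast_nonneg _
  have hrn2 : (0:ℝ) ≤ ((N1 x (2*j^2+1) (2*m) : ℕ) : ℝ) := Nat.cast_nonneg _
  have habs : |Sm - Sj| ≤ 4*(j:ℝ) := by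
    rw [abs_le]
    constructor <;> nlinarith [e1, e2, hrb1, hrb2, hrn1, hrn2]
  -- bounds on scales
  have hrm0 : (0:ℝ) < m := by exact_mod_cast hm1
  have hrj0 : (0:ℝ) < j := by exact_mod_cast hj1
  have hrj1 : (1:ℝ) ≤ j := by exact_mod_cast hj1
  have hrjsq : ((j:ℝ))^2 ≤ m := by exact_mod_cast hjsq
  have hrm2 : (m:ℝ) ≤ (j:ℝ)^2 + 2*j := by exact_mod_cast hm2
  have hrjK : ((16 + 8*θ)/ε) < j := by
    have : (K:ℝ) ≤ j := by exact_mod_cast (by omega : K ≤ j)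
    linarith
  have hεj : 16 + 8*θ < ε * j := by
    rw [div_lt_iff₀ hε] at hrjK
    linarith
  -- the four pieces
  have hx1 := hJ1 j (by omega)
  have hx2 := hJ2 (j^2) (by
    calc J2 ≤ j := by omega
      _ ≤ j^2 := Nat.le_self_pow (by norm_num) j)
  rw [Real.dist_eq] at hx2
  have hrjsq0 : (0:ℝ) < (j:ℝ)^2 := by positivity
  have hcastsq : ((j^2 : ℕ) : ℝ) = (j:ℝ)^2 := by push_cast; ring
  rw [hcastsq] at hx2
  set D : ℝ := mb (j^2) / (j:ℝ)^2 - θ with hD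
  have hDlt : |D| < ε/4 := hx2
  -- decomposition
  have hdecomp : Sm/m - θ = (Sm - Sj)/m + (Sj - mb (j^2))/m
      + ((j:ℝ)^2/m) * D + θ * ((j:ℝ)^2 - m)/m := by
    rw [hD]
    field_simp
    ring
  rw [Real.dist_eq, hdecomp]
  have ht1 : |(Sm - Sj)/m| < ε/4 := by
    rw [abs_div, abs_of_pos hrm0]
    have h1 : |Sm - Sj|/m ≤ 4*(j:ℝ)/m := by gcongr
    have h2 : 4*(j:ℝ)/m ≤ 4/(j:ℝ) := by
      rw [div_le_div_iff₀ hrm0 hrj0]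
      nlinarith [hrjsq]
    have h3 : 4/(j:ℝ) < ε/4 := by
      rw [div_lt_iff₀ hrj0]
      linarith [hεj]
    linarith
  have ht2 : |(Sj - mb (j^2))/m| ≤ ε/4 := by
    rw [abs_div, abs_of_pos hrm0]
    have h1 : |Sj - mb (j^2)|/m ≤ ((j:ℝ)^2/(c+1))/m := by gcongr
    have h2 : ((j:ℝ)^2/(c+1))/m ≤ 1/((c:ℝ)+1) := by
      rw [div_div, div_le_div_iff₀ (by positivity) (by positivity)]
      nlinarith [hrjsq, mul_le_mul_of_nonneg_left hrjsq (by positivity : (0:ℝ) ≤ (c:ℝ)+1)]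
    linarith
  have ht3 : |((j:ℝ)^2/m) * D| < ε/4 := by
    rw [abs_mul, abs_of_pos (by positivity : (0:ℝ) < (j:ℝ)^2/m)]
    have h1 : (j:ℝ)^2/m ≤ 1 := by
      rw [div_le_one hrm0]
      exact hrjsq
    calc ((j:ℝ)^2/m) * |D| ≤ 1 * |D| :=
          mul_le_mul_of_nonneg_right h1 (abs_nonneg _)
      _ = |D| := by ring
      _ < ε/4 := hDlt
  have ht4 : |θ * ((j:ℝ)^2 - m)/m| < ε/4 := by
    rw [abs_div, abs_of_pos hrm0, abs_mul, abs_of_nonneg hθ,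
      abs_of_nonpos (by linarith : (j:ℝ)^2 - m ≤ 0)]
    have h1 : θ * (-((j:ℝ)^2 - m))/m ≤ θ * (2*j)/m := by
      gcongr
      linarith
    have h2 : θ * (2*(j:ℝ))/m ≤ 2*θ/(j:ℝ) := by
      rw [div_le_div_iff₀ hrm0 hrj0]
      nlinarith [mul_le_mul_of_nonneg_left hrjsq hθ]
    have h3 : 2*θ/(j:ℝ) < ε/4 := by
      rw [div_lt_iff₀ hrj0]
      linarith [hεj, mul_nonneg hθ (le_of_lt hrj0)]
    linarith
  calc |(Sm - Sj)/m + (Sj - mb (j^2))/m + ((j:ℝ)^2/m) * D + θ * ((j:ℝ)^2 - m)/m|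
      ≤ |(Sm - Sj)/m + (Sj - mb (j^2))/m + ((j:ℝ)^2/m) * D| + |θ * ((j:ℝ)^2 - m)/m| :=
        abs_add_le _ _
    _ ≤ |(Sm - Sj)/m + (Sj - mb (j^2))/m| + |((j:ℝ)^2/m) * D| + |θ * ((j:ℝ)^2 - m)/m| := by
        linarith [abs_add_le ((Sm - Sj)/m + (Sj - mb (j^2))/m) (((j:ℝ)^2/m) * D)]
    _ ≤ |(Sm - Sj)/m| + |(Sj - mb (j^2))/m| + |((j:ℝ)^2/m) * D| + |θ * ((j:ℝ)^2 - m)/m| := by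
        linarith [abs_add_le ((Sm - Sj)/m) ((Sj - mb (j^2))/m)]
    _ < ε := by linarith

end AlphaProof
namespace AlphaProof

lemma tsum_bad_ne_top (p q : ℝ) (hp0 : 0 ≤ p) (hp1 : p ≤ 1) (hq0 : 0 ≤ q) (hq1 : q ≤ 1)
    (Pm : Measure Sigma2) (hPm : IsPmu p q Pm) (ε : ℝ) (hε : 0 < ε) :
    ∑' j : ℕ, Pm {x : Sigma2 |
      ε * ((j^2 : ℕ):ℝ) < |(N1 x (j^2+1) (2*j^2) : ℝ) - mubar p q (j^2)|} ≠ ⊤ := by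
  set B : ℕ → Set Sigma2 := fun j =>
    {x : Sigma2 | ε * ((j^2 : ℕ):ℝ) < |(N1 x (j^2+1) (2*j^2) : ℝ) - mubar p q (j^2)|} with hB
  set g : ℕ → ENNReal := fun j => ENNReal.ofReal (1/(4*ε^2)) * ENNReal.ofReal (1/((j:ℝ)^2))
    with hg
  have hbound : ∀ j, Pm (B j) ≤ g j := by
    intro j
    rcases Nat.eq_zero_or_pos j with hj | hj
    · subst hj
      have hempty : B 0 = ∅ := by
        ext x
        simp only [hB, Set.mem_setOf_eq, Set.mem_empty_iff_false, iff_false, not_lt]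
        have h1 : N1 x (0^2+1) (2*0^2) = 0 := by
          simp [N1]
        have h2 : mubar p q (0^2) = 0 := by
          simp [mubar]
        rw [h1, h2]
        simp
      rw [hempty]
      simp
    · have hcheb := Pm_cheb p q hp0 hp1 hq0 hq1 Pm hPm (j^2)
        (Nat.one_le_pow _ _ hj) ε hε
      calc Pm (B j) ≤ ENNReal.ofReal (1 / (4 * ε^2 * ((j^2:ℕ):ℝ))) := hcheb
        _ = g j := by
            have hj0 : ((j:ℝ))^2 ≠ 0 := by
              have : (0:ℝ) < j := by exact_mod_cast hj
              positivity
            show ENNReal.ofReal (1 / (4 * ε ^ 2 * ((j^2:ℕ):ℝ)))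
              = ENNReal.ofReal (1/(4*ε^2)) * ENNReal.ofReal (1/((j:ℝ)^2))
            rw [← ENNReal.ofReal_mul (by positivity)]
            congr 1
            push_cast
            field_simp
  have hgsum : ∑' j, g j ≠ ⊤ := by
    rw [hg]
    simp only []
    rw [ENNReal.tsum_mul_left]
    apply ENNReal.mul_ne_top ENNReal.ofReal_ne_top
    have hsummable : Summable (fun j : ℕ => 1/((j:ℝ)^2)) := by
      have := Real.summable_one_div_nat_pow.2 (by norm_num : 1 < 2)
      simpa using this
    rw [← ENNReal.ofReal_tsum_of_nonneg (fun n => by positivity) hsummable]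
    exact ENNReal.ofReal_ne_top
  exact ne_top_of_le_ne_top hgsum (ENNReal.tsum_le_tsum hbound)

end AlphaProof

/-- Lemma 3.2: for `p ∈ (0,1)`, `q ∈ [0,1]`, for `ℙ_μ`-a.e. `x ∈ Σ₂`, the frequencies
`α_n(x) = N_1(x_{n/2+1}^n)/(n/2)` (over even `n = 2m`) converge to `2p/(1+p+q)`. -/
theorem alpha_tendsto (p q : ℝ) (hp : p ∈ Set.Ioo (0 : ℝ) 1) (hq : q ∈ Set.Icc (0 : ℝ) 1)
    (Pm : Measure Sigma2) (hPm : IsPmu p q Pm) :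
    ∀ᵐ x ∂Pm, Tendsto (fun m : ℕ => (N1 x (m + 1) (2 * m) : ℝ) / (m : ℝ)) atTop
      (nhds (2 * p / (1 + p + q))) := by
  obtain ⟨hp0, hp1⟩ := hp
  obtain ⟨hq0, hq1⟩ := hq
  have hp0' : 0 ≤ p := le_of_lt hp0
  have hp1' : p ≤ 1 := le_of_lt hp1
  have hθ : 0 ≤ 2 * p / (1 + p + q) := by positivity
  have key : ∀ c : ℕ, ∀ᵐ x ∂Pm, ∀ᶠ j : ℕ in atTop,
      |(N1 x (j^2+1) (2*j^2) : ℝ) - AlphaProof.mubar p q (j^2)| ≤ ((j:ℝ)^2)/((c:ℝ)+1) := by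
    intro c
    have hε : (0:ℝ) < 1/((c:ℝ)+1) := by positivity
    have hsum := AlphaProof.tsum_bad_ne_top p q hp0' hp1' hq0 hq1 Pm hPm (1/((c:ℝ)+1)) hε
    have hae := MeasureTheory.ae_eventually_notMem hsum
    filter_upwards [hae] with x hxx
    filter_upwards [hxx] with j hj
    simp only [Set.mem_setOf_eq, not_lt] at hj
    calc |(N1 x (j^2+1) (2*j^2) : ℝ) - AlphaProof.mubar p q (j^2)|
        ≤ (1/((c:ℝ)+1)) * ((j^2 : ℕ):ℝ) := hj
      _ = ((j:ℝ)^2)/((c:ℝ)+1) := by push_cast; ring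
  have hae : ∀ᵐ x ∂Pm, ∀ c : ℕ, ∀ᶠ j : ℕ in atTop,
      |(N1 x (j^2+1) (2*j^2) : ℝ) - AlphaProof.mubar p q (j^2)| ≤ ((j:ℝ)^2)/((c:ℝ)+1) :=
    (MeasureTheory.ae_all_iff).2 key
  filter_upwards [hae] with x hx
  apply AlphaProof.sandwich x _ hθ (AlphaProof.mubar p q)
    (AlphaProof.tendsto_mubar p q hp0 hp1 hq0 hq1)
  intro c
  exact hx c
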